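/- In the polynomial ring ℤ[X_1,...,X_{k+1}, e_1,...,e_n] with the specialization e_j ↦ e_j(X_1,...,X_n) of elementary symmetric polynomials (for n ≥ k+1 variables containing X_1,...,X_{k+1} among X_1,...,X_n), the identity h_{n-k} - e_1·h_{n-k-1} + e_2·h_{n-k-2} - ... + (-1)^{n-k} e_{n-k} = 0 holds, where h_j = h_j(X_1,...,X_{k+1}) is the complete homogeneous symmetric polynomial of degree j in X_1,...,X_{k+1} and e_i = e_i(X_1,...,X_n). -/

import Mathlib

open MvPolynomial

lemma aux_geom_inv {A : Type*} [CommRing A] (r : A) :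
    (1 - PowerSeries.C r * PowerSeries.X) * PowerSeries.mk (fun j => r ^ j) = 1 := by
  ext n
  rcases n with _ | n
  · simp
  · rw [sub_mul, one_mul, map_sub, mul_assoc, PowerSeries.coeff_C_mul,
      PowerSeries.coeff_succ_X_mul, PowerSeries.coeff_mk, PowerSeries.coeff_mk,
      PowerSeries.coeff_one]
    simp [pow_succ, mul_comm]

lemma aux_coeff_one_sub {A : Type*} [CommRing A] (r : A) (j : ℕ) :
    PowerSeries.coeff j (1 - PowerSeries.C r * PowerSeries.X) =
      if j = 0 then 1 else if j = 1 then -r else 0 := by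
  rw [map_sub, PowerSeries.coeff_one, PowerSeries.coeff_C_mul, PowerSeries.coeff_X]
  rcases j with _ | _ | j <;> simp

open Finset in
lemma aux_coeff_prod_one_sub {A : Type*} [CommRing A] {ι : Type*} [DecidableEq ι]
    (s : Finset ι) (a : ι → A) (d : ℕ) :
    (PowerSeries.coeff d) (∏ i ∈ s, (1 - PowerSeries.C (a i) * PowerSeries.X)) =
      (-1) ^ d * ∑ t ∈ s.powersetCard d, ∏ i ∈ t, a i := by
  rw [PowerSeries.coeff_prod, mul_sum]
  rw [← Finset.sum_filter_of_ne (p := fun l : ι →₀ ℕ => ∀ i ∈ s, l i ≤ 1)]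
  · refine Finset.sum_nbij' (fun l => Finsupp.support l) (fun t => (t.1 : Multiset ι).toFinsupp)
      ?_ ?_ ?_ ?_ ?_
    · intro l hl
      simp only [mem_filter, mem_finsuppAntidiag] at hl
      obtain ⟨⟨hsum, hsupp⟩, hle⟩ := hl
      rw [mem_powersetCard]
      refine ⟨hsupp, ?_⟩
      have h1 : ∑ i ∈ l.support, l i = d := by
        rw [← hsum]
        exact Finset.sum_subset hsupp (fun x _ hx => Finsupp.notMem_support_iff.mp hx)
      rw [← h1, Finset.card_eq_sum_ones]
      refine Finset.sum_congr rfl fun i hi => ?_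
      have h2 := hle i (hsupp hi)
      have h3 : l i ≠ 0 := Finsupp.mem_support_iff.mp hi
      omega
    · intro t ht
      rw [mem_powersetCard] at ht
      simp only [mem_filter, mem_finsuppAntidiag]
      have hcount : ∀ i, (t.1 : Multiset ι).toFinsupp i = if i ∈ t then 1 else 0 := by
        intro i
        rw [Multiset.toFinsupp_apply]
        split <;> simp_all [Multiset.count_eq_one_of_mem t.nodup, Multiset.count_eq_zero]
      refine ⟨⟨?_, ?_⟩, ?_⟩
      · calc s.sum ⇑(Multiset.toFinsupp t.val) = ∑ i ∈ s, if i ∈ t then 1 else 0 :=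
              Finset.sum_congr rfl fun i _ => hcount i
          _ = d := by
              rw [Finset.sum_ite_mem, Finset.inter_eq_right.mpr ht.1, ← ht.2,
                Finset.card_eq_sum_ones]
      · intro i hi
        rw [Multiset.toFinsupp_support] at hi
        exact ht.1 (by simpa using hi)
      · intro i _
        rw [hcount]; split <;> omega
    · intro l hl
      simp only [mem_filter, mem_finsuppAntidiag] at hl
      obtain ⟨⟨hsum, hsupp⟩, hle⟩ := hl
      ext i
      rw [Multiset.toFinsupp_apply]
      by_cases h : i ∈ l.support
      · rw [Multiset.count_eq_one_of_mem l.support.nodup (by simpa using h)]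
        have h2 := hle i (hsupp h)
        have h3 : l i ≠ 0 := Finsupp.mem_support_iff.mp h
        omega
      · rw [Multiset.count_eq_zero.mpr (by simpa using h)]
        exact (Finsupp.notMem_support_iff.mp h).symm
    · intro t ht
      rw [mem_powersetCard] at ht
      simp [Multiset.toFinsupp_support]
    · intro l hl
      simp only [mem_filter, mem_finsuppAntidiag] at hl
      obtain ⟨⟨hsum, hsupp⟩, hle⟩ := hl
      have hcard : l.support.card = d := by
        have h1 : ∑ i ∈ l.support, l i = d := by
          rw [← hsum]
          exact Finset.sum_subset hsupp (fun x _ hx => Finsupp.notMem_support_iff.mp hx)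
        rw [← h1, Finset.card_eq_sum_ones]
        refine Finset.sum_congr rfl fun i hi => ?_
        have h2 := hle i (hsupp hi)
        have h3 : l i ≠ 0 := Finsupp.mem_support_iff.mp hi
        omega
      calc ∏ i ∈ s, PowerSeries.coeff (l i) (1 - PowerSeries.C (a i) * PowerSeries.X)
          = ∏ i ∈ l.support, PowerSeries.coeff (l i)
              (1 - PowerSeries.C (a i) * PowerSeries.X) := by
            refine (Finset.prod_subset hsupp fun x _ hx => ?_).symm
            rw [Finsupp.notMem_support_iff.mp hx, aux_coeff_one_sub]; simp
        _ = ∏ i ∈ l.support, (- a i) := by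
            refine Finset.prod_congr rfl fun i hi => ?_
            have h2 := hle i (hsupp hi)
            have h3 : l i ≠ 0 := Finsupp.mem_support_iff.mp hi
            have : l i = 1 := by omega
            rw [this, aux_coeff_one_sub]; simp
        _ = ∏ i ∈ l.support, ((-1 : A) * a i) :=
            Finset.prod_congr rfl fun i _ => (neg_one_mul _).symm
        _ = (-1) ^ d * ∏ i ∈ l.support, a i := by
            rw [Finset.prod_mul_distrib, Finset.prod_const, hcard]
  · intro l hl h
    by_contra hc
    push_neg at hc
    obtain ⟨i, hi, hi2⟩ := hc
    refine h (Finset.prod_eq_zero hi ?_)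
    rw [aux_coeff_one_sub]
    have : l i ≠ 0 ∧ l i ≠ 1 := by omega
    simp [this.1, this.2]

open Finset in
lemma aux_coeff_prod_geom {A : Type*} [CommRing A] {σ : Type*} [Fintype σ] [DecidableEq σ]
    (a : σ → A) (d : ℕ) :
    (PowerSeries.coeff d) (∏ i : σ, PowerSeries.mk fun j => a i ^ j) =
      ∑ s : Sym σ d, ((s : Multiset σ).map a).prod := by
  rw [PowerSeries.coeff_prod]
  simp only [PowerSeries.coeff_mk]
  have hcard : ∀ l : σ →₀ ℕ, l ∈ finsuppAntidiag (univ : Finset σ) d →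
      Multiset.card (Finsupp.toMultiset l) = d := by
    intro l hl
    rw [mem_finsuppAntidiag] at hl
    rw [Finsupp.card_toMultiset]
    rw [Finsupp.sum, ← hl.1]
    exact Finset.sum_subset (subset_univ _) (fun x _ hx => Finsupp.notMem_support_iff.mp hx)
  refine Finset.sum_bij (fun l hl => (⟨Finsupp.toMultiset l, hcard l hl⟩ : Sym σ d))
    (fun _ _ => mem_univ _) ?_ ?_ ?_
  · intro l hl l' hl' h
    have := congrArg (fun s : Sym σ d => Multiset.toFinsupp (s : Multiset σ)) h
    simpa [Finsupp.toMultiset_toFinsupp] using this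
  · intro b _
    refine ⟨Multiset.toFinsupp (b : Multiset σ), ?_, ?_⟩
    · rw [mem_finsuppAntidiag]
      refine ⟨?_, subset_univ _⟩
      have : ∑ i : σ, Multiset.count i (b : Multiset σ) = Multiset.card (b : Multiset σ) := by
        rw [← Multiset.toFinset_sum_count_eq]
        exact (Finset.sum_subset (subset_univ _)
          (fun x _ hx => Multiset.count_eq_zero.mpr (by simpa using hx))).symm
      exact (Finset.sum_congr rfl fun i _ => Multiset.toFinsupp_apply _ _).trans (this.trans b.2)
    · apply Subtype.ext
      simp [Multiset.toFinsupp_toMultiset]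
  · intro l hl
    show ∏ x : σ, a x ^ l x = ((Finsupp.toMultiset l).map a).prod
    rw [Finset.prod_multiset_map_count, Finsupp.toFinset_toMultiset]
    refine (Finset.prod_subset (subset_univ _) fun x _ hx => ?_).symm.trans
      (Finset.prod_congr rfl fun i _ => by rw [Finsupp.count_toMultiset])
    rw [Finsupp.notMem_support_iff.mp hx, pow_zero]

/-- For variables `X_1, …, X_n` and `0 ≤ k ≤ n-1`, let `e_i` be the `i`-th elementary
symmetric polynomial in all `n` variables and `h_j` the `j`-th complete homogeneous
symmetric polynomial in the first `k+1` variables.  Then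
`h_{n-k} - e_1 h_{n-k-1} + e_2 h_{n-k-2} - ⋯ + (-1)^{n-k} e_{n-k} = 0`, i.e.
`∑_{j=0}^{n-k} (-1)^j e_j h_{n-k-j} = 0`. -/
theorem esymm_hsymm_alternating_sum (n k : ℕ) (hkn : k + 1 ≤ n) :
    ∑ j ∈ Finset.range (n - k + 1),
        ((-1 : MvPolynomial (Fin n) ℤ) ^ j) * esymm (Fin n) ℤ j *
          rename (Fin.castLE hkn) (hsymm (Fin (k + 1)) ℤ (n - k - j)) = 0 := by
  classical
  set A := MvPolynomial (Fin n) ℤ with hA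
  set m := n - k with hm
  set f : Fin (k + 1) → Fin n := Fin.castLE hkn with hf
  have hfinj : Function.Injective f := Fin.castLE_injective hkn
  set H : PowerSeries A := ∏ i : Fin (k + 1), PowerSeries.mk fun j => (X (f i) : A) ^ j with hH
  set P : PowerSeries A :=
    ∏ i : Fin (k + 1), (1 - PowerSeries.C (X (f i)) * PowerSeries.X) with hP
  set E : PowerSeries A := ∏ i : Fin n, (1 - PowerSeries.C (X i) * PowerSeries.X) with hE
  have hPH : P * H = 1 := by
    rw [hP, hH, ← Finset.prod_mul_distrib]
    exact Finset.prod_eq_one fun i _ => aux_geom_inv _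
  set T : Finset (Fin n) := Finset.univ.image f with hT
  set Q : PowerSeries A :=
    ∏ i ∈ Finset.univ \ T, (1 - PowerSeries.C (X i) * PowerSeries.X) with hQ
  have hEPQ : E = Q * P := by
    rw [hE, hQ, hP, ← Finset.prod_sdiff (Finset.subset_univ T)]
    congr 1
    rw [hT, Finset.prod_image (fun a _ b _ h => hfinj h)]
  have hEH : E * H = Q := by
    rw [hEPQ, mul_assoc, hPH, mul_one]
  have hQ0 : PowerSeries.coeff m Q = 0 := by
    rw [hQ, aux_coeff_prod_one_sub]
    have hTcard : T.card = k + 1 := by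
      rw [hT, Finset.card_image_of_injective _ hfinj, Finset.card_univ, Fintype.card_fin]
    have hcard : (Finset.univ \ T).card < m := by
      rw [Finset.card_sdiff_of_subset (Finset.subset_univ T), Finset.card_univ, Fintype.card_fin, hTcard]
      omega
    rw [Finset.powersetCard_eq_empty.mpr hcard, Finset.sum_empty, mul_zero]
  have hcoeffE : ∀ j, PowerSeries.coeff j E = (-1) ^ j * esymm (Fin n) ℤ j := by
    intro j
    rw [hE, aux_coeff_prod_one_sub, esymm]
  have hcoeffH : ∀ j, PowerSeries.coeff j H = rename f (hsymm (Fin (k + 1)) ℤ j) := by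
    intro j
    rw [hH, aux_coeff_prod_geom, hsymm, map_sum]
    exact Finset.sum_congr rfl fun s _ => by
      rw [← Multiset.prod_hom' _ (rename f : MvPolynomial (Fin (k + 1)) ℤ →ₐ[ℤ] A)]
      simp [rename_X]
  calc ∑ j ∈ Finset.range (n - k + 1),
        ((-1 : MvPolynomial (Fin n) ℤ) ^ j) * esymm (Fin n) ℤ j *
          rename (Fin.castLE hkn) (hsymm (Fin (k + 1)) ℤ (n - k - j))
      = ∑ j ∈ Finset.range (m + 1),
          PowerSeries.coeff j E * PowerSeries.coeff (m - j) H := by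
        refine Finset.sum_congr rfl fun j _ => ?_
        rw [hcoeffE, hcoeffH]
    _ = ∑ p ∈ Finset.HasAntidiagonal.antidiagonal m, PowerSeries.coeff p.1 E * PowerSeries.coeff p.2 H :=
        (Finset.Nat.sum_antidiagonal_eq_sum_range_succ_mk
          (fun p => PowerSeries.coeff p.1 E * PowerSeries.coeff p.2 H) m).symm
    _ = PowerSeries.coeff m (E * H) := (PowerSeries.coeff_mul _ _ _).symm
    _ = 0 := by rw [hEH, hQ0]
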